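/- arXiv:2601.17316 — 3 statements merged into one kernel-verified Lean document; each statement's English description precedes it below -/
import Mathlib

section
/- If a Banach space Y has the Schur property, then for every reflexive Banach space X the pair (X,Y) has the weak minimizing property. -/
open Filter Topology

noncomputable def minMod {X Y : Type*} [NormedAddCommGroup X] [NormedSpace ℝ X]
    [NormedAddCommGroup Y] [NormedSpace ℝ Y] (T : X →L[ℝ] Y) : ℝ :=
  sInf {r : ℝ | ∃ x : X, ‖x‖ = 1 ∧ ‖T x‖ = r}

def WeaklyNull {X : Type*} [NormedAddCommGroup X] [NormedSpace ℝ X] (x : ℕ → X) : Prop :=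
  ∀ f : X →L[ℝ] ℝ, Tendsto (fun n => f (x n)) atTop (𝓝 0)

def AttainsMinMod {X Y : Type*} [NormedAddCommGroup X] [NormedSpace ℝ X]
    [NormedAddCommGroup Y] [NormedSpace ℝ Y] (T : X →L[ℝ] Y) : Prop :=
  ∃ x : X, ‖x‖ = 1 ∧ ‖T x‖ = minMod T

def PairPropM (X Y : Type*) [NormedAddCommGroup X] [NormedSpace ℝ X]
    [NormedAddCommGroup Y] [NormedSpace ℝ Y] : Prop :=
  ∀ T : X →L[ℝ] Y, 1 ≤ minMod T →
    ∀ (x : X) (y : Y), ‖x‖ ≤ ‖y‖ → ∀ xs : ℕ → X, WeaklyNull xs →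
      limsup (fun n => ‖x + xs n‖) atTop ≤ limsup (fun n => ‖y + T (xs n)‖) atTop

def PairPropO (X Y : Type*) [NormedAddCommGroup X] [NormedSpace ℝ X]
    [NormedAddCommGroup Y] [NormedSpace ℝ Y] : Prop :=
  ∀ T : X →L[ℝ] Y, 1 ≤ minMod T →
    ∀ y : Y, y ≠ 0 → ∀ xs : ℕ → X, WeaklyNull xs →
      limsup (fun n => ‖xs n‖) atTop < limsup (fun n => ‖y + T (xs n)‖) atTop

def PropertyM (X : Type*) [NormedAddCommGroup X] [NormedSpace ℝ X] : Prop :=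
  ∀ x y : X, ‖y‖ ≤ ‖x‖ → ∀ xs : ℕ → X, WeaklyNull xs →
    limsup (fun n => ‖y + xs n‖) atTop ≤ limsup (fun n => ‖x + xs n‖) atTop

def OpialProperty (X : Type*) [NormedAddCommGroup X] [NormedSpace ℝ X] : Prop :=
  ∀ x : X, x ≠ 0 → ∀ xs : ℕ → X, WeaklyNull xs →
    limsup (fun n => ‖xs n‖) atTop < limsup (fun n => ‖x + xs n‖) atTop

def WeakMinimizingProperty (X Y : Type*) [NormedAddCommGroup X] [NormedSpace ℝ X]
    [NormedAddCommGroup Y] [NormedSpace ℝ Y] : Prop :=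
  ∀ T : X →L[ℝ] Y,
    (∃ xs : ℕ → X, (∀ n, ‖xs n‖ = 1) ∧
      Tendsto (fun n => ‖T (xs n)‖) atTop (𝓝 (minMod T)) ∧ ¬ WeaklyNull xs) →
    AttainsMinMod T

/-! ### Auxiliary lemmas -/

lemma clusterPt_eq_of_tendsto {L : Filter ℕ} [L.NeBot] {v : ℕ → ℝ} {c a : ℝ}
    (hc : MapClusterPt c L v) (hv : Tendsto v L (𝓝 a)) : c = a := by
  have h1 : ClusterPt c (Filter.map v L) := hc.clusterPt
  rw [ClusterPt] at h1
  exact eq_of_nhds_neBot (h1.mono (inf_le_inf_left _ hv))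

lemma clusterPt_mem_of_closed {L : Filter ℕ} {v : ℕ → ℝ} {c : ℝ} {s : Set ℝ}
    (hc : MapClusterPt c L v) (hcl : IsClosed s) (hev : ∀ᶠ n in L, v n ∈ s) : c ∈ s := by
  have h1 : Filter.map v L ≤ 𝓟 s := le_principal_iff.2 (mem_map.2 hev)
  have h2 : ClusterPt c (𝓟 s) := hc.clusterPt.mono h1
  rw [← hcl.closure_eq]
  exact mem_closure_iff_clusterPt.2 h2

lemma weak_cluster {X : Type*} [NormedAddCommGroup X] [NormedSpace ℝ X]
    (hsurj : Function.Surjective ⇑(NormedSpace.inclusionInDoubleDual ℝ X))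
    (u : ℕ → X) (hu : ∀ n, ‖u n‖ ≤ 1) (L : Filter ℕ) [L.NeBot] :
    ∃ x : X, ‖x‖ ≤ 1 ∧ ∀ f : X →L[ℝ] ℝ, MapClusterPt (f x) L (fun n => f (u n)) := by
  set J := NormedSpace.inclusionInDoubleDual ℝ X with hJ
  have hcomp : IsCompact (WeakDual.toStrongDual ⁻¹'
      Metric.closedBall (0 : StrongDual ℝ (StrongDual ℝ X)) 1) :=
    WeakDual.isCompact_closedBall 0 1
  let w : ℕ → WeakDual ℝ (StrongDual ℝ X) :=
    fun n => StrongDual.toWeakDual (J (u n))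
  have hw : ∀ n, w n ∈ WeakDual.toStrongDual ⁻¹'
      Metric.closedBall (0 : StrongDual ℝ (StrongDual ℝ X)) 1 := by
    intro n
    simp only [Set.mem_preimage, Metric.mem_closedBall, dist_zero_right]
    have : ‖J (u n)‖ = ‖u n‖ := (NormedSpace.inclusionInDoubleDualLi ℝ).norm_map (u n)
    refine le_of_eq_of_le (dist_zero_right (WeakDual.toStrongDual (w n) : StrongDual ℝ (StrongDual ℝ X))) ?_
    calc ‖(WeakDual.toStrongDual (w n) : StrongDual ℝ (StrongDual ℝ X))‖
        = ‖J (u n)‖ := rfl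
      _ ≤ 1 := this ▸ hu n
  haveI : (Filter.map w L).NeBot := Filter.NeBot.map (f := L) inferInstance w
  have hle : Filter.map w L ≤ 𝓟 (WeakDual.toStrongDual ⁻¹'
      Metric.closedBall (0 : StrongDual ℝ (StrongDual ℝ X)) 1) :=
    le_principal_iff.2 (mem_map.2 (Eventually.of_forall hw))
  obtain ⟨z, hz, hcl⟩ := hcomp hle
  obtain ⟨x, hx⟩ := hsurj (WeakDual.toStrongDual z)
  refine ⟨x, ?_, ?_⟩
  · have h1 : ‖J x‖ ≤ 1 := by
      rw [hx]
      exact (dist_zero_right (WeakDual.toStrongDual z : StrongDual ℝ (StrongDual ℝ X))).symm.le.trans (Metric.mem_closedBall.1 hz)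
    rwa [show ‖J x‖ = ‖x‖ from (NormedSpace.inclusionInDoubleDualLi ℝ).norm_map x] at h1
  · intro f
    have hcont : ContinuousAt (fun z : WeakDual ℝ (StrongDual ℝ X) => z f) z :=
      (WeakDual.eval_continuous f).continuousAt
    have h2 : MapClusterPt z L w := hcl
    have h3 := h2.continuousAt_comp hcont
    have he1 : ((fun z : WeakDual ℝ (StrongDual ℝ X) => z f) ∘ w) = fun n => f (u n) := rfl
    have he2 : z f = f x := by
      exact (DFunLike.congr_fun hx f).symm
    rw [he1, he2] at h3
    exact h3

lemma exists_freq {v : ℕ → ℝ} {b : ℝ} (h : ¬ Tendsto v atTop (𝓝 b)) :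
    ∃ ε > 0, ∃ᶠ n in atTop, ε ≤ |v n - b| := by
  by_contra hc
  push_neg at hc
  apply h
  rw [Metric.tendsto_nhds]
  intro ε hε
  have := hc ε hε
  simpa [Real.dist_eq] using this

theorem stmt15 {Y : Type*} [NormedAddCommGroup Y] [NormedSpace ℝ Y] [CompleteSpace Y]
    (hSchur : ∀ (y : ℕ → Y) (l : Y),
      (∀ f : Y →L[ℝ] ℝ, Tendsto (fun n => f (y n)) atTop (𝓝 (f l))) →
      Tendsto y atTop (𝓝 l)) :
    ∀ (X : Type) [NormedAddCommGroup X] [NormedSpace ℝ X] [CompleteSpace X],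
      Function.Surjective ⇑(NormedSpace.inclusionInDoubleDual ℝ X) →
      WeakMinimizingProperty X Y := by
  intro X _ _ _ hsurj T hmin
  obtain ⟨xs, hxs1, hxsT, hxsnw⟩ := hmin
  -- basic facts about `minMod`
  have hbdd : BddBelow {r : ℝ | ∃ x : X, ‖x‖ = 1 ∧ ‖T x‖ = r} := by
    refine ⟨0, ?_⟩
    rintro r ⟨x, -, rfl⟩
    exact norm_nonneg _
  have hne : Set.Nonempty {r : ℝ | ∃ x : X, ‖x‖ = 1 ∧ ‖T x‖ = r} :=
    ⟨‖T (xs 0)‖, xs 0, hxs1 0, rfl⟩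
  have hm0 : 0 ≤ minMod T := by
    apply le_csInf hne
    rintro r ⟨x, -, rfl⟩
    exact norm_nonneg _
  have hmle : ∀ x : X, ‖x‖ = 1 → minMod T ≤ ‖T x‖ := fun x h =>
    csInf_le hbdd ⟨x, h, rfl⟩
  have hlow : ∀ z : X, minMod T * ‖z‖ ≤ ‖T z‖ := by
    intro z
    rcases eq_or_ne z 0 with rfl | hz
    · simp
    · have hnz : ‖z‖ ≠ 0 := norm_ne_zero_iff.2 hz
      have h1 : ‖(‖z‖⁻¹ • z : X)‖ = 1 := norm_smul_inv_norm hz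
      have h2 := hmle _ h1
      rw [map_smul, norm_smul, norm_inv, norm_norm] at h2
      calc minMod T * ‖z‖ ≤ (‖z‖⁻¹ * ‖T z‖) * ‖z‖ :=
            mul_le_mul_of_nonneg_right h2 (norm_nonneg z)
        _ = ‖T z‖ := by field_simp
  rcases eq_or_lt_of_le hm0 with hm | hm
  · -- case `minMod T = 0`
    obtain ⟨f, hf⟩ := not_forall.1 hxsnw
    obtain ⟨ε, hε, hfreq⟩ := exists_freq (b := 0) (by simpa using hf)
    set L := atTop ⊓ 𝓟 {n : ℕ | ε ≤ |f (xs n) - 0|} with hL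
    haveI hLne : L.NeBot := frequently_iff_neBot.1 hfreq
    obtain ⟨x, hx1, hxcl⟩ := weak_cluster hsurj xs (fun n => (hxs1 n).le) L
    have hxne : x ≠ 0 := by
      intro h0
      have hmem : (f x) ∈ {r : ℝ | ε ≤ |r - 0|} := by
        refine clusterPt_mem_of_closed (hxcl f) ?_ ?_
        · exact isClosed_le continuous_const ((continuous_id.sub continuous_const).abs)
        · exact Filter.eventually_inf_principal.mpr (Eventually.of_forall fun n hn => hn)
      rw [h0] at hmem
      simp only [map_zero, zero_sub, abs_neg, abs_zero, Set.mem_setOf_eq] at hmem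
      linarith
    have hTx : T x = 0 := by
      apply NormedSpace.eq_zero_of_forall_dual_eq_zero ℝ
      intro g
      have h1 : Tendsto (fun n => g (T (xs n))) atTop (𝓝 0) := by
        have hb : Tendsto (fun n => ‖g‖ * ‖T (xs n)‖) atTop (𝓝 0) := by
          have h := hxsT.const_mul ‖g‖
          rwa [← hm, mul_zero] at h
        exact squeeze_zero_norm (fun n => g.le_opNorm (T (xs n))) hb
      have h2 : MapClusterPt (g (T x)) L (fun n => g (T (xs n))) := by
        have := hxcl (g.comp T)
        simpa using this
      exact clusterPt_eq_of_tendsto h2 (h1.mono_left inf_le_left)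
    refine ⟨‖x‖⁻¹ • x, norm_smul_inv_norm hxne, ?_⟩
    rw [map_smul, hTx, smul_zero, norm_zero, ← hm]
  · -- case `0 < minMod T`
    -- the closed span of the image sequence
    set Zmod : Submodule ℝ Y :=
      (Submodule.span ℝ (Set.range fun n => T (xs n))).topologicalClosure with hZmod
    have hZclosed : IsClosed (Zmod : Set Y) := Submodule.isClosed_topologicalClosure _
    have hZconv : Convex ℝ (Zmod : Set Y) := Zmod.convex
    have hmemZmod : ∀ n, T (xs n) ∈ Zmod := fun n =>
      (Submodule.span ℝ (Set.range fun n => T (xs n))).le_topologicalClosure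
        (Submodule.subset_span (Set.mem_range_self n))
    -- a countable total family of functionals on Zmod
    have hsep : TopologicalSpace.IsSeparable (Zmod : Set Y) := by
      rw [hZmod, Submodule.topologicalClosure_coe]
      exact ((Set.countable_range _).isSeparable.span).closure
    obtain ⟨c, hcct, hcdense⟩ := hsep
    obtain ⟨zseq, hzseq⟩ := (hcct.insert 0).exists_eq_range (Set.insert_nonempty _ _)
    choose g hg1 hg2 using fun j => exists_dual_vector'' ℝ (zseq j)
    have htotal : ∀ y : Y, y ∈ Zmod → (∀ j, g j y = 0) → y = 0 := by
      intro y hy hgy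
      have key : ∀ δ : ℝ, 0 < δ → ‖y‖ < 2 * δ := by
        intro δ hδ
        have hy2 : y ∈ closure (Set.range zseq) := by
          rw [← hzseq]
          exact closure_mono (Set.subset_insert 0 c) (hcdense hy)
        obtain ⟨zb, hzb, hdist⟩ := Metric.mem_closure_iff.1 hy2 δ hδ
        obtain ⟨j, rfl⟩ := hzb
        have hd : ‖y - zseq j‖ < δ := by rwa [dist_eq_norm] at hdist
        have h1 : ‖y‖ ≤ ‖zseq j‖ + ‖y - zseq j‖ := by
          calc ‖y‖ = ‖zseq j + (y - zseq j)‖ := by congr 1; abel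
            _ ≤ ‖zseq j‖ + ‖y - zseq j‖ := norm_add_le _ _
        have h2 : ‖zseq j‖ ≤ ‖y - zseq j‖ := by
          have e1 : ‖zseq j‖ = g j (zseq j) := by exact_mod_cast (hg2 j).symm
          have e2 : g j (zseq j) = g j (zseq j - y) := by
            rw [map_sub, hgy j, sub_zero]
          have e3 : g j (zseq j - y) ≤ ‖g j (zseq j - y)‖ := le_abs_self _
          have e4 : ‖g j (zseq j - y)‖ ≤ ‖g j‖ * ‖zseq j - y‖ := (g j).le_opNorm _
          have e5 : ‖g j‖ * ‖zseq j - y‖ ≤ 1 * ‖zseq j - y‖ :=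
            mul_le_mul_of_nonneg_right (hg1 j) (norm_nonneg _)
          rw [e1, e2, ← norm_sub_rev]
          linarith
        linarith
      by_contra hyne
      have hpos : 0 < ‖y‖ := norm_pos_iff.2 hyne
      have := key (‖y‖ / 2) (by linarith)
      linarith
    -- a bound on the image sequence
    have hTb : ∀ n j, g j (T (xs n)) ∈ Set.Icc (-(‖T‖ + 1)) (‖T‖ + 1) := by
      intro n j
      have h1 : ‖g j (T (xs n))‖ ≤ ‖g j‖ * ‖T (xs n)‖ := (g j).le_opNorm _
      have h2 : ‖T (xs n)‖ ≤ ‖T‖ := by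
        have := T.le_opNorm (xs n)
        rwa [hxs1 n, mul_one] at this
      have h3 : ‖g j‖ * ‖T (xs n)‖ ≤ 1 * ‖T‖ :=
        mul_le_mul (hg1 j) h2 (norm_nonneg _) zero_le_one
      rw [one_mul] at h3
      have h4 : |g j (T (xs n))| ≤ ‖T‖ + 1 := by
        rw [← Real.norm_eq_abs]; linarith
      exact Set.mem_Icc.2 (abs_le.1 h4)
    -- diagonal subsequence making all `g j`-values converge
    have hcompact : IsCompact (Set.pi Set.univ fun _ : ℕ => Set.Icc (-(‖T‖ + 1)) (‖T‖ + 1)) :=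
      isCompact_univ_pi fun _ => isCompact_Icc
    have hVmem : ∀ n, (fun j => g j (T (xs n))) ∈
        Set.pi Set.univ fun _ : ℕ => Set.Icc (-(‖T‖ + 1)) (‖T‖ + 1) := by
      intro n
      rw [Set.mem_univ_pi]
      exact fun j => hTb n j
    obtain ⟨a, -, φ, hφ, hVconv⟩ := hcompact.tendsto_subseq hVmem
    have hak : ∀ k, Tendsto (fun n => g k (T (xs (φ n)))) atTop (𝓝 (a k)) := by
      intro k
      exact tendsto_pi_nhds.1 hVconv k
    -- vanishing functionals
    have hvanish : ∀ (L : Filter ℕ), L.NeBot → L ≤ atTop → ∀ y : Y,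
        (∀ gg : Y →L[ℝ] ℝ, MapClusterPt (gg y) L (fun n => gg (T (xs (φ n))))) →
        y ∈ Zmod := by
      intro L hLne hLle y hy
      by_contra hyZ
      obtain ⟨gg, u, hgu, hu⟩ := geometric_hahn_banach_closed_point hZconv hZclosed hyZ
      have hggZ : ∀ z ∈ Zmod, gg z = 0 := by
        intro z hz
        by_contra hzz
        have h1 : gg (((u + 1) / gg z) • z) < u := hgu _ (Zmod.smul_mem _ hz)
        rw [map_smul, smul_eq_mul, div_mul_cancel₀ _ hzz] at h1
        linarith
      have h0 : gg y = 0 := by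
        haveI := hLne
        have h2 : Tendsto (fun n => gg (T (xs (φ n)))) L (𝓝 0) := by
          have : (fun n => gg (T (xs (φ n)))) = fun _ => (0 : ℝ) := by
            funext n
            exact hggZ _ (hmemZmod (φ n))
          rw [this]
          exact tendsto_const_nhds
        exact clusterPt_eq_of_tendsto (hy gg) h2
      have h3 : (0 : ℝ) < u := by
        have := hgu 0 Zmod.zero_mem
        rwa [map_zero] at this
      rw [h0] at hu
      linarith
    -- uniqueness of weak cluster points of the subsequence
    obtain ⟨x₀, hx₀1, hx₀cl⟩ := weak_cluster hsurj (fun n => xs (φ n))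
      (fun n => (hxs1 _).le) atTop
    have hy₀cl : ∀ gg : Y →L[ℝ] ℝ,
        MapClusterPt (gg (T x₀)) atTop (fun n => gg (T (xs (φ n)))) := by
      intro gg
      have := hx₀cl (gg.comp T)
      simpa using this
    have huniq : ∀ (L : Filter ℕ), L.NeBot → L ≤ atTop → ∀ y : Y,
        (∀ gg : Y →L[ℝ] ℝ, MapClusterPt (gg y) L (fun n => gg (T (xs (φ n))))) →
        y = T x₀ := by
      intro L hLne hLle y hy
      haveI := hLne
      have h1 : y ∈ Zmod := hvanish L hLne hLle y hy
      have h2 : T x₀ ∈ Zmod := hvanish atTop atTop_neBot le_rfl _ hy₀cl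
      have h3 : ∀ k, g k y = a k := fun k =>
        clusterPt_eq_of_tendsto (hy (g k)) ((hak k).mono_left hLle)
      have h4 : ∀ k, g k (T x₀) = a k := fun k =>
        clusterPt_eq_of_tendsto (hy₀cl (g k)) (hak k)
      have h5 : y - T x₀ = 0 := by
        apply htotal _ (Zmod.sub_mem h1 h2)
        intro j
        rw [map_sub, h3 j, h4 j, sub_self]
      exact sub_eq_zero.1 h5
    -- weak convergence of the image subsequence
    have hweak : ∀ gg : Y →L[ℝ] ℝ,
        Tendsto (fun n => gg (T (xs (φ n)))) atTop (𝓝 (gg (T x₀))) := by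
      intro gg
      by_contra hng
      obtain ⟨ε, hε, hfreq⟩ := exists_freq hng
      set L := atTop ⊓ 𝓟 {n : ℕ | ε ≤ |gg (T (xs (φ n))) - gg (T x₀)|} with hL
      haveI hLne : L.NeBot := frequently_iff_neBot.1 hfreq
      obtain ⟨x₂, -, hx₂cl⟩ := weak_cluster hsurj (fun n => xs (φ n))
        (fun n => (hxs1 _).le) L
      have hy₂cl : ∀ gg' : Y →L[ℝ] ℝ,
          MapClusterPt (gg' (T x₂)) L (fun n => gg' (T (xs (φ n)))) := by
        intro gg'
        have := hx₂cl (gg'.comp T)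
        simpa using this
      have heq : T x₂ = T x₀ := huniq L hLne inf_le_left _ hy₂cl
      have hmem : gg (T x₂) ∈ {r : ℝ | ε ≤ |r - gg (T x₀)|} := by
        refine clusterPt_mem_of_closed (hy₂cl gg) ?_ ?_
        · exact isClosed_le continuous_const ((continuous_id.sub continuous_const).abs)
        · exact Filter.eventually_inf_principal.mpr (Eventually.of_forall fun n hn => hn)
      rw [heq] at hmem
      simp only [sub_self, abs_zero, Set.mem_setOf_eq] at hmem
      linarith
    -- Schur property gives norm convergence of the images
    have hnorm : Tendsto (fun n => T (xs (φ n))) atTop (𝓝 (T x₀)) :=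
      hSchur _ _ hweak
    -- hence the subsequence is Cauchy
    have hcauchy : CauchySeq (fun n => xs (φ n)) := by
      rw [Metric.cauchySeq_iff]
      intro ε hε
      have hTc : CauchySeq (fun n => T (xs (φ n))) := hnorm.cauchySeq
      rw [Metric.cauchySeq_iff] at hTc
      obtain ⟨N, hN⟩ := hTc (minMod T * ε) (mul_pos hm hε)
      refine ⟨N, fun i hi j hj => ?_⟩
      have h1 := hN i hi j hj
      rw [dist_eq_norm] at h1 ⊢
      have h2 : minMod T * ‖xs (φ i) - xs (φ j)‖ ≤ ‖T (xs (φ i)) - T (xs (φ j))‖ := by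
        have := hlow (xs (φ i) - xs (φ j))
        rwa [map_sub] at this
      have h3 : minMod T * ‖xs (φ i) - xs (φ j)‖ < minMod T * ε := lt_of_le_of_lt h2 h1
      exact lt_of_mul_lt_mul_left h3 hm.le
    obtain ⟨x₁, hx₁⟩ := cauchySeq_tendsto_of_complete hcauchy
    have hx₁norm : ‖x₁‖ = 1 := by
      have h1 : Tendsto (fun n => ‖xs (φ n)‖) atTop (𝓝 ‖x₁‖) := hx₁.norm
      have h2 : (fun n => ‖xs (φ n)‖) = fun _ => (1 : ℝ) := by
        funext n; exact hxs1 _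
      rw [h2] at h1
      exact tendsto_nhds_unique h1 tendsto_const_nhds
    have hTx₁ : ‖T x₁‖ = minMod T := by
      have h1 : Tendsto (fun n => ‖T (xs (φ n))‖) atTop (𝓝 ‖T x₁‖) :=
        (((T.continuous.tendsto x₁).comp hx₁).norm)
      have h2 : Tendsto (fun n => ‖T (xs (φ n))‖) atTop (𝓝 (minMod T)) :=
        hxsT.comp (hφ.tendsto_atTop)
      exact tendsto_nhds_unique h1 h2
    exact ⟨x₁, hx₁norm, hTx₁⟩
end

section
/- The pair (ℓ_1, ℓ_1) does not have the compact perturbation property for minimum modulus: there exist T ∈ L(ℓ_1) and a rank-one (hence compact) K ∈ K(ℓ_1) such that T does not attain its minimum modulus, m(T) ≤ 1, and m(T + K) ≥ 3, so sup_{L ∈ K(ℓ_1)} m(T + L) > m(T). -/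
open Filter Topology

open scoped ENNReal

noncomputable def e1b (n : ℕ) : lp (fun _ : ℕ => ℝ) 1 := lp.single 1 n 1

namespace S16
noncomputable abbrev Xs := lp (fun _ : ℕ => ℝ) 1
lemma hp1 : 0 < (1 : ℝ≥0∞).toReal := by norm_num
lemma hasSum_x (x : Xs) : HasSum (fun i => |(x : ∀ _ : ℕ, ℝ) i|) ‖x‖ := by
  simpa [Real.rpow_natCast, Real.norm_eq_abs] using lp.hasSum_norm hp1 x
lemma summable_abs (x : Xs) : Summable (fun i => |(x : ∀ _ : ℕ, ℝ) i|) := (hasSum_x x).summable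
lemma norm_eq (x : Xs) : ‖x‖ = ∑' i, |(x : ∀ _ : ℕ, ℝ) i| := (hasSum_x x).tsum_eq.symm
lemma e1b_apply (n j : ℕ) : (e1b n : ∀ _ : ℕ, ℝ) j = if j = n then 1 else 0 := by
  by_cases h : j = n
  · subst h; simp [e1b, lp.single_apply_self]
  · simp [e1b, lp.single_apply_ne _ _ _ h, h]
lemma tsum_split2 (f : ℕ → ℝ) (hf : Summable f) :
    ∑' k, f k = f 0 + f 1 + ∑' k, f (k + 2) := by
  rw [hf.tsum_eq_zero_add, ((summable_nat_add_iff 1).mpr hf).tsum_eq_zero_add, ← add_assoc]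

/-- coefficient sequence for the first output coordinate -/
noncomputable def cc (n : ℕ) : ℝ := if n = 0 then -(3/2) else 3*(1 - (1/2:ℝ)^(n+1))

lemma pow_half_le (n : ℕ) : ((1/2:ℝ))^n ≤ 1 :=
  pow_le_one₀ (by norm_num) (by norm_num)
lemma pow_half_pos (n : ℕ) : (0:ℝ) < (1/2:ℝ)^n := by positivity

lemma cc_succ (n : ℕ) : cc (n+1) = 3*(1 - (1/2:ℝ)^(n+2)) := by simp [cc]
lemma cc_succ_nonneg (n : ℕ) : 0 ≤ cc (n+1) := by
  rw [cc_succ]; have := pow_half_le (n+2); nlinarith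
lemma abs_cc_le (n : ℕ) : |cc n| ≤ 3 := by
  rcases n with _ | n
  · simp [cc]; norm_num [abs_of_nonneg]
  · rw [abs_of_nonneg (cc_succ_nonneg n), cc_succ]
    have := pow_half_pos (n+2); nlinarith

lemma summable_ccx (x : Xs) : Summable (fun n => cc n * (x : ∀ _ : ℕ, ℝ) n) := by
  refine Summable.of_norm_bounded ((summable_abs x).mul_left 3) (fun n => ?_)
  rw [Real.norm_eq_abs, abs_mul]
  exact mul_le_mul_of_nonneg_right (abs_cc_le n) (abs_nonneg _)

/-- the underlying function of T -/
noncomputable def Ffun (x : Xs) : ℕ → ℝ := fun k =>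
  match k with
  | 0 => 0
  | 1 => ∑' n, cc n * (x : ∀ _ : ℕ, ℝ) n
  | (k+2) => 3 * (x : ∀ _ : ℕ, ℝ) (k+1)

lemma summable_absF (x : Xs) : Summable (fun k => |Ffun x k|) := by
  apply (summable_nat_add_iff 2).mp
  have : Summable (fun n => 3 * |(x : ∀ _ : ℕ, ℝ) (n+1)|) :=
    ((summable_nat_add_iff 1).mpr (summable_abs x)).mul_left 3
  refine this.congr fun n => ?_
  show 3 * |(x : ∀ _ : ℕ, ℝ) (n+1)| = |Ffun x (n+2)|
  simp [Ffun, abs_mul]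

lemma memF (x : Xs) : Memℓp (Ffun x) 1 := by
  apply memℓp_gen
  simpa [Real.rpow_natCast, Real.norm_eq_abs] using summable_absF x

noncomputable def TL : Xs →ₗ[ℝ] Xs where
  toFun x := ⟨Ffun x, memF x⟩
  map_add' x y := by
    apply lp.ext
    funext k
    have hx := summable_ccx x
    have hy := summable_ccx y
    match k with
    | 0 => show Ffun (x + y) 0 = Ffun x 0 + Ffun y 0; simp [Ffun]
    | 1 =>
      show Ffun (x + y) 1 = Ffun x 1 + Ffun y 1
      simp only [Ffun, lp.coeFn_add, Pi.add_apply, mul_add]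
      exact hx.tsum_add hy
    | (k+2) =>
      show Ffun (x + y) (k+2) = Ffun x (k+2) + Ffun y (k+2)
      simp [Ffun, lp.coeFn_add, Pi.add_apply]; ring
  map_smul' c x := by
    apply lp.ext
    funext k
    match k with
    | 0 => simp [Ffun]
    | 1 =>
      show Ffun (c • x) 1 = c * Ffun x 1
      simp only [Ffun, lp.coeFn_smul, Pi.smul_apply, smul_eq_mul]
      rw [← tsum_mul_left]
      congr 1; funext n; ring
    | (k+2) =>
      show Ffun (c • x) (k+2) = c * Ffun x (k+2)
      simp [Ffun, lp.coeFn_smul, Pi.smul_apply]; ring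

lemma TL_coe (x : Xs) : ((TL x : Xs) : ∀ _ : ℕ, ℝ) = Ffun x := rfl

lemma abs_tsum_ccx_le (x : Xs) : |∑' n, cc n * (x : ∀ _ : ℕ, ℝ) n| ≤ 3 * ‖x‖ := by
  have hs : Summable (fun n => |cc n| * |(x : ∀ _ : ℕ, ℝ) n|) := by
    simpa [abs_mul] using (summable_ccx x).abs
  calc |∑' n, cc n * (x : ∀ _ : ℕ, ℝ) n| ≤ ∑' n, |cc n| * |(x : ∀ _ : ℕ, ℝ) n| := by
        simpa [Real.norm_eq_abs, abs_mul] using norm_tsum_le_tsum_norm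
          (f := fun n => cc n * (x : ∀ _ : ℕ, ℝ) n) ((summable_ccx x).abs)
    _ ≤ ∑' n, 3 * |(x : ∀ _ : ℕ, ℝ) n| := by
        refine Summable.tsum_le_tsum (fun n => ?_) hs ((summable_abs x).mul_left 3)
        exact mul_le_mul_of_nonneg_right (abs_cc_le n) (abs_nonneg _)
    _ = 3 * ‖x‖ := by rw [tsum_mul_left, norm_eq]

lemma norm_TL (x : Xs) :
    ‖TL x‖ = |∑' n, cc n * (x : ∀ _ : ℕ, ℝ) n| + 3 * ∑' n, |(x : ∀ _ : ℕ, ℝ) (n+1)| := by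
  rw [norm_eq, TL_coe, tsum_split2 _ (summable_absF x)]
  have h0 : |Ffun x 0| = 0 := by simp [Ffun]
  have h2 : ∑' k, |Ffun x (k+2)| = 3 * ∑' n, |(x : ∀ _ : ℕ, ℝ) (n+1)| := by
    rw [← tsum_mul_left]
    congr 1; funext k; simp [Ffun, abs_mul]
  rw [h0, h2]
  simp [Ffun]

lemma norm_x_split (x : Xs) :
    ‖x‖ = |(x : ∀ _ : ℕ, ℝ) 0| + ∑' n, |(x : ∀ _ : ℕ, ℝ) (n+1)| := by
  rw [norm_eq, (summable_abs x).tsum_eq_zero_add]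

noncomputable def Tclm : Xs →L[ℝ] Xs :=
  LinearMap.mkContinuous TL 6 (by
    intro x
    rw [norm_TL]
    have h1 := abs_tsum_ccx_le x
    have h2 : ∑' n, |(x : ∀ _ : ℕ, ℝ) (n+1)| ≤ ‖x‖ := by
      rw [norm_x_split]
      have := abs_nonneg ((x : ∀ _ : ℕ, ℝ) 0)
      linarith
    linarith)

lemma Tclm_coe (x : Xs) : ((Tclm x : Xs) : ∀ _ : ℕ, ℝ) = Ffun x := rfl

end S16
-- continuation: basis action, K, norms
namespace S16

lemma Ffun_e1b_one (n : ℕ) : Ffun (e1b n) 1 = cc n := by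
  show (∑' j, cc j * (e1b n : ∀ _ : ℕ, ℝ) j) = cc n
  rw [tsum_eq_single n]
  · rw [e1b_apply]; simp
  · intro j hj; rw [e1b_apply]; simp [hj]

lemma T_e1b_zero : Tclm (e1b 0) = (-(3/2) : ℝ) • e1b 1 := by
  apply lp.ext
  funext k
  rw [Tclm_coe]
  have : ((((-(3/2) : ℝ)) • e1b 1 : Xs) : ∀ _ : ℕ, ℝ) k = -(3/2) * (e1b 1 : ∀ _ : ℕ, ℝ) k := by
    rw [lp.coeFn_smul]; simp
  rw [this]
  match k with
  | 0 => simp [Ffun, e1b_apply]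
  | 1 => rw [Ffun_e1b_one]; simp [cc, e1b_apply]
  | (k+2) =>
    show 3 * (e1b 0 : ∀ _ : ℕ, ℝ) (k+1) = _
    simp [e1b_apply]

lemma T_e1b_succ (n : ℕ) :
    Tclm (e1b (n+1)) = (3:ℝ) • ((1 - (1/2:ℝ)^(n+2)) • e1b 1 + e1b (n+2)) := by
  apply lp.ext
  funext k
  rw [Tclm_coe]
  have hr : (((3:ℝ) • ((1 - (1/2:ℝ)^(n+2)) • e1b 1 + e1b (n+2)) : Xs) : ∀ _ : ℕ, ℝ) k
      = 3 * ((1 - (1/2:ℝ)^(n+2)) * (e1b 1 : ∀ _ : ℕ, ℝ) k + (e1b (n+2) : ∀ _ : ℕ, ℝ) k) := by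
    rw [lp.coeFn_smul, Pi.smul_apply, lp.coeFn_add, Pi.add_apply, lp.coeFn_smul, Pi.smul_apply]
    simp
  rw [hr]
  match k with
  | 0 => simp [Ffun, e1b_apply]
  | 1 => rw [Ffun_e1b_one, cc_succ]; simp [e1b_apply]
  | (k+2) =>
    show 3 * (e1b (n+1) : ∀ _ : ℕ, ℝ) (k+1) = _
    simp only [e1b_apply]
    by_cases h : k + 1 = n + 1
    · have h2 : k + 2 = n + 2 := by omega
      simp [h, h2]
    · have h2 : ¬ (k + 2 = n + 2) := by omega
      simp [h, h2]

/-- evaluation-at-0 functional -/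
noncomputable def ev0 : Xs →L[ℝ] ℝ :=
  LinearMap.mkContinuous
    { toFun := fun x => (x : ∀ _ : ℕ, ℝ) 0
      map_add' := fun x y => by
        show ((x + y : Xs) : ∀ _ : ℕ, ℝ) 0 = (x : ∀ _ : ℕ, ℝ) 0 + (y : ∀ _ : ℕ, ℝ) 0
        rw [lp.coeFn_add]; simp
      map_smul' := fun c x => by
        show ((c • x : Xs) : ∀ _ : ℕ, ℝ) 0 = c • (x : ∀ _ : ℕ, ℝ) 0
        rw [lp.coeFn_smul]; simp }
    1 (fun x => by
      simpa [Real.norm_eq_abs] using lp.norm_apply_le_norm one_ne_zero x 0)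

lemma ev0_apply (x : Xs) : ev0 x = (x : ∀ _ : ℕ, ℝ) 0 := rfl

noncomputable def vv : Xs := (3/2 : ℝ) • e1b 1 + (3 : ℝ) • e1b 0

noncomputable def Kclm : Xs →L[ℝ] Xs := ev0.smulRight vv

lemma Kclm_apply (x : Xs) : Kclm x = ((x : ∀ _ : ℕ, ℝ) 0) • vv := rfl

lemma Kclm_compact : IsCompactOperator ⇑Kclm := by
  refine ⟨(fun t : ℝ => t • vv) '' Set.Icc (-1) 1,
    (isCompact_Icc.image (by continuity)), ?_⟩
  refine Filter.mem_of_superset (Metric.closedBall_mem_nhds 0 one_pos) ?_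
  intro x hx
  rw [Metric.mem_closedBall, dist_zero_right] at hx
  refine ⟨(x : ∀ _ : ℕ, ℝ) 0, ?_, rfl⟩
  constructor
  · have := (abs_le.mp (by
      simpa [Real.norm_eq_abs] using (lp.norm_apply_le_norm one_ne_zero x 0).trans hx)).1
    linarith
  · have := (abs_le.mp (by
      simpa [Real.norm_eq_abs] using (lp.norm_apply_le_norm one_ne_zero x 0).trans hx)).2
    linarith

lemma vv_coords (k : ℕ) : (vv : ∀ _ : ℕ, ℝ) k =
    if k = 0 then 3 else if k = 1 then 3/2 else 0 := by
  show ((((3/2 : ℝ) • e1b 1 + (3 : ℝ) • e1b 0) : Xs) : ∀ _ : ℕ, ℝ) k = _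
  rw [lp.coeFn_add, Pi.add_apply, lp.coeFn_smul, Pi.smul_apply, lp.coeFn_smul, Pi.smul_apply]
  match k with
  | 0 => simp [e1b_apply]
  | 1 => simp [e1b_apply]
  | (k+2) => simp [e1b_apply]

/-- two point norm -/
lemma norm_two_point (a b : ℝ) {i j : ℕ} (h : i ≠ j) :
    ‖a • e1b i + b • e1b j‖ = |a| + |b| := by
  have hcoe : ∀ k, (((a • e1b i + b • e1b j : Xs)) : ∀ _ : ℕ, ℝ) k
      = a * (e1b i : ∀ _ : ℕ, ℝ) k + b * (e1b j : ∀ _ : ℕ, ℝ) k := by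
    intro k
    rw [lp.coeFn_add, Pi.add_apply, lp.coeFn_smul, Pi.smul_apply, lp.coeFn_smul, Pi.smul_apply]
    simp
  have h1 : HasSum (fun k => |((a • e1b i + b • e1b j : Xs) : ∀ _ : ℕ, ℝ) k|) (|a| + |b|) := by
    have hA : HasSum (fun k => (if k = i then |a| else 0) + (if k = j then |b| else 0))
        (|a| + |b|) := (hasSum_ite_eq i |a|).add (hasSum_ite_eq j |b|)
    have he : (fun k => |((a • e1b i + b • e1b j : Xs) : ∀ _ : ℕ, ℝ) k|)
        = fun k => (if k = i then |a| else 0) + (if k = j then |b| else 0) := by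
      funext k
      rw [hcoe k, e1b_apply, e1b_apply]
      by_cases hk : k = i
      · have hk' : ¬ (k = j) := fun hh => h (hk ▸ hh ▸ rfl)
        simp [hk, hk', h]
      · by_cases hk' : k = j
        · simp [hk, hk', (Ne.symm h : ¬ (j = i))]
        · simp [hk, hk']
    rw [he]
    exact hA
  exact (hasSum_x _).unique h1

end S16
namespace S16

lemma norm_e1b (n : ℕ) : ‖e1b n‖ = 1 := by
  simpa [e1b] using lp.norm_single hp1 (fun _ : ℕ => (1:ℝ)) n

lemma minMod_le (T : Xs →L[ℝ] Xs) (x : Xs) (hx : ‖x‖ = 1) : minMod T ≤ ‖T x‖ :=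
  csInf_le ⟨0, fun r ⟨y, _, hy⟩ => hy ▸ norm_nonneg _⟩ ⟨x, hx, rfl⟩

lemma le_minMod (T : Xs →L[ℝ] Xs) (c : ℝ) (h : ∀ x : Xs, ‖x‖ = 1 → c ≤ ‖T x‖) :
    c ≤ minMod T :=
  le_csInf ⟨‖T (e1b 0)‖, e1b 0, norm_e1b 0, rfl⟩ (fun r ⟨x, hx, hr⟩ => hr ▸ h x hx)

lemma norm_Tclm (x : Xs) :
    ‖Tclm x‖ = |∑' n, cc n * (x : ∀ _ : ℕ, ℝ) n| + 3 * ∑' n, |(x : ∀ _ : ℕ, ℝ) (n+1)| :=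
  norm_TL x

set_option maxHeartbeats 1000000 in
lemma key_lower (x : Xs) (hx : ‖x‖ = 1) : 1 < ‖Tclm x‖ := by
  set X : ∀ _ : ℕ, ℝ := (x : ∀ _ : ℕ, ℝ) with hX
  set s := ∑' n, |X (n+1)| with hs
  set δ := ∑' n, (1/2:ℝ)^(n+2) * |X (n+1)| with hδdef
  have hsum1 : Summable (fun n => |X (n+1)|) := (summable_nat_add_iff 1).mpr (summable_abs x)
  have hsumδ : Summable (fun n => (1/2:ℝ)^(n+2) * |X (n+1)|) := by
    refine Summable.of_nonneg_of_le (fun n => by positivity) (fun n => ?_) hsum1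
    exact mul_le_of_le_one_left (abs_nonneg _) (pow_half_le _)
  have hδ0 : 0 ≤ δ := tsum_nonneg (fun n => by positivity)
  have hδs : δ ≤ s := by
    refine Summable.tsum_le_tsum (fun n => ?_) hsumδ hsum1
    exact mul_le_of_le_one_left (abs_nonneg _) (pow_half_le _)
  have hs0 : 0 ≤ s := tsum_nonneg (fun n => abs_nonneg _)
  have hax : |X 0| + s = 1 := by rw [hs, hX, ← norm_x_split x, hx]
  have hT : ‖Tclm x‖ = |∑' n, cc n * X n| + 3 * s := norm_Tclm x
  have hsplit : ∑' n, cc n * X n = cc 0 * X 0 + ∑' n, cc (n+1) * X (n+1) :=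
    (summable_ccx x).tsum_eq_zero_add
  have hsumc : Summable (fun n => cc (n+1) * X (n+1)) :=
    (summable_nat_add_iff 1).mpr (summable_ccx x)
  have htail : |∑' n, cc (n+1) * X (n+1)| ≤ 3*s - 3*δ := by
    have h1 : ∀ n, |cc (n+1)| * |X (n+1)| = 3*|X (n+1)| - 3*((1/2:ℝ)^(n+2) * |X (n+1)|) := by
      intro n
      rw [abs_of_nonneg (cc_succ_nonneg n), cc_succ]; ring
    calc |∑' n, cc (n+1) * X (n+1)| ≤ ∑' n, |cc (n+1)| * |X (n+1)| := by
          have h := norm_tsum_le_tsum_norm (f := fun n => cc (n+1) * X (n+1))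
            (by simpa [Real.norm_eq_abs, abs_mul] using hsumc.abs)
          simpa [Real.norm_eq_abs, abs_mul] using h
      _ = ∑' n, (3*|X (n+1)| - 3*((1/2:ℝ)^(n+2) * |X (n+1)|)) := tsum_congr h1
      _ = 3*s - 3*δ := by
          rw [Summable.tsum_sub (hsum1.mul_left 3) (hsumδ.mul_left 3), tsum_mul_left, tsum_mul_left]
  have habs0 : |cc 0 * X 0| = (3/2) * |X 0| := by
    rw [abs_mul]; norm_num [cc]
  have hClow : (3/2) * |X 0| - (3*s - 3*δ) ≤ |∑' n, cc n * X n| := by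
    have h6 : |cc 0 * X 0| ≤ |∑' n, cc n * X n| + |∑' n, cc (n+1) * X (n+1)| := by
      calc |cc 0 * X 0|
          = |(cc 0 * X 0 + ∑' n, cc (n+1) * X (n+1)) + (-(∑' n, cc (n+1) * X (n+1)))| := by
            rw [add_neg_cancel_right]
        _ ≤ |cc 0 * X 0 + ∑' n, cc (n+1) * X (n+1)| + |∑' n, cc (n+1) * X (n+1)| := by
            simpa using abs_add_le (cc 0 * X 0 + ∑' n, cc (n+1) * X (n+1))
              (-(∑' n, cc (n+1) * X (n+1)))
        _ = |∑' n, cc n * X n| + |∑' n, cc (n+1) * X (n+1)| := by rw [← hsplit]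
    rw [habs0] at h6
    linarith
  by_cases hcase : 1/3 < s
  · have := abs_nonneg (∑' n, cc n * X n)
    linarith
  · push_neg at hcase
    by_cases hszero : s = 0
    · have : (3/2 : ℝ) ≤ ‖Tclm x‖ := by
        rw [hT]
        have : |X 0| = 1 := by linarith
        nlinarith [hClow]
      linarith
    · have hspos : 0 < s := lt_of_le_of_ne hs0 (Ne.symm hszero)
      have hδpos : 0 < δ := by
        have hex : ∃ n, X (n+1) ≠ 0 := by
          by_contra hall
          push_neg at hall
          have : s = 0 := by
            rw [hs]
            convert tsum_zero with n
            simp [hall n]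
          exact hszero this
        obtain ⟨n, hn⟩ := hex
        have hterm : 0 < (1/2:ℝ)^(n+2) * |X (n+1)| := by
          have := abs_pos.mpr hn
          positivity
        calc (0:ℝ) < (1/2:ℝ)^(n+2) * |X (n+1)| := hterm
          _ ≤ δ := Summable.le_tsum hsumδ n (fun m _ => by positivity)
      rw [hT]
      nlinarith [hClow]

lemma not_attains : ¬ AttainsMinMod Tclm → True := fun _ => trivial

/-- coordinates of (T+K) x -/
lemma TK_coord (x : Xs) (k : ℕ) :
    (((Tclm + Kclm) x : Xs) : ∀ _ : ℕ, ℝ) k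
      = Ffun x k + ((x : ∀ _ : ℕ, ℝ) 0) * (vv : ∀ _ : ℕ, ℝ) k := by
  have h : (Tclm + Kclm) x = Tclm x + Kclm x := rfl
  rw [h, lp.coeFn_add, Pi.add_apply, Tclm_coe, Kclm_apply, lp.coeFn_smul, Pi.smul_apply]
  simp

lemma norm_TK_ge (x : Xs) (hx : ‖x‖ = 1) : 3 ≤ ‖(Tclm + Kclm) x‖ := by
  set y := (Tclm + Kclm) x with hy
  have hsumy : Summable (fun k => |(y : ∀ _ : ℕ, ℝ) k|) := summable_abs y
  have h0 : |(y : ∀ _ : ℕ, ℝ) 0| = 3 * |(x : ∀ _ : ℕ, ℝ) 0| := by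
    rw [hy, TK_coord]
    simp [Ffun, vv_coords, abs_mul, mul_comm]
  have h2 : ∀ k : ℕ, |(y : ∀ _ : ℕ, ℝ) (k+2)| = 3 * |(x : ∀ _ : ℕ, ℝ) (k+1)| := by
    intro k
    rw [hy, TK_coord]
    have : (vv : ∀ _ : ℕ, ℝ) (k+2) = 0 := by rw [vv_coords]; simp
    rw [this]
    simp [Ffun, abs_mul]
  have hsplit := tsum_split2 _ hsumy
  have htail : ∑' k, |(y : ∀ _ : ℕ, ℝ) (k+2)| = 3 * ∑' n, |(x : ∀ _ : ℕ, ℝ) (n+1)| := by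
    rw [← tsum_mul_left]
    exact tsum_congr h2
  have hxsplit : |(x : ∀ _ : ℕ, ℝ) 0| + ∑' n, |(x : ∀ _ : ℕ, ℝ) (n+1)| = 1 := by
    rw [← norm_x_split x, hx]
  have h1 : 0 ≤ |(y : ∀ _ : ℕ, ℝ) 1| := abs_nonneg _
  calc (3:ℝ) = 3 * (|(x : ∀ _ : ℕ, ℝ) 0| + ∑' n, |(x : ∀ _ : ℕ, ℝ) (n+1)|) := by
        rw [hxsplit]; ring
    _ ≤ |(y : ∀ _ : ℕ, ℝ) 0| + |(y : ∀ _ : ℕ, ℝ) 1| + ∑' k, |(y : ∀ _ : ℕ, ℝ) (k+2)| := by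
        rw [h0, htail]; linarith
    _ = ‖y‖ := by rw [norm_eq y, hsplit]

end S16
namespace S16

lemma three_sub_pos (n : ℕ) : 0 < 3 - (1/2:ℝ)^(n+1) := by
  have := pow_half_le (n+1); have := pow_half_pos (n+1); linarith

lemma exists_unit_small (n : ℕ) :
    ∃ u : Xs, ‖u‖ = 1 ∧ ‖Tclm u‖ = 3 / (3 - (1/2:ℝ)^(n+1)) := by
  set ε : ℝ := (1/2:ℝ)^(n+2) with hε
  set a : ℝ := 2*(1-ε) with ha
  set c : ℝ := (3 - (1/2:ℝ)^(n+1))⁻¹ with hc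
  have hεpos : 0 < ε := pow_half_pos _
  have hεle : ε ≤ 1/2 := by
    calc ε ≤ (1/2:ℝ)^1 := pow_le_pow_of_le_one (by norm_num) (by norm_num) (by omega)
      _ = 1/2 := by norm_num
  have h2ε : 2*ε = (1/2:ℝ)^(n+1) := by rw [hε]; ring
  have hcpos : 0 < c := inv_pos.mpr (three_sub_pos n)
  have hapos : 0 < a := by rw [ha]; linarith
  refine ⟨c • (a • e1b 0 + (1:ℝ) • e1b (n+1)), ?_, ?_⟩
  · rw [norm_smul, norm_two_point a 1 (by omega : (0:ℕ) ≠ n+1)]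
    rw [Real.norm_eq_abs, abs_of_pos hcpos, abs_of_pos hapos, abs_one]
    rw [hc, ha, ← h2ε]
    rw [show 2*(1-ε)+1 = 3-2*ε from by ring]
    exact inv_mul_cancel₀ (by rw [h2ε]; exact (three_sub_pos n).ne')
  · have hmap : Tclm (c • (a • e1b 0 + (1:ℝ) • e1b (n+1)))
        = c • (a • Tclm (e1b 0) + (1:ℝ) • Tclm (e1b (n+1))) := by
      rw [map_smul, map_add, map_smul, map_smul]
    rw [hmap, T_e1b_zero, T_e1b_succ]
    have hinner : a • ((-(3/2) : ℝ) • e1b 1) + (1:ℝ) • ((3:ℝ) • ((1 - (1/2:ℝ)^(n+2)) • e1b 1 + e1b (n+2)))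
        = (a * (-(3/2)) + 3*(1-ε)) • e1b 1 + (3:ℝ) • e1b (n+2) := by
      rw [hε]
      module
    have hzero : a * (-(3/2)) + 3*(1-ε) = 0 := by rw [ha]; ring
    rw [hinner, hzero, norm_smul, norm_two_point 0 3 (by omega : (1:ℕ) ≠ n+2)]
    rw [Real.norm_eq_abs, abs_of_pos hcpos, hc]
    norm_num
    rw [inv_mul_eq_div]

lemma minMod_T_le_one : minMod Tclm ≤ 1 := by
  have h0 : Tendsto (fun n : ℕ => (1/2:ℝ)^(n+1)) atTop (𝓝 0) := by
    have h := tendsto_pow_atTop_nhds_zero_of_lt_one (by norm_num : (0:ℝ) ≤ 1/2)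
      (by norm_num : (1/2:ℝ) < 1)
    exact h.comp (tendsto_add_atTop_nat 1)
  have hlim : Tendsto (fun n : ℕ => 3 / (3 - (1/2:ℝ)^(n+1))) atTop (𝓝 1) := by
    have h1 : Tendsto (fun n : ℕ => 3 - (1/2:ℝ)^(n+1)) atTop (𝓝 (3 - 0)) :=
      tendsto_const_nhds.sub h0
    have h2 : Tendsto (fun n : ℕ => 3 / (3 - (1/2:ℝ)^(n+1))) atTop (𝓝 (3/(3-0))) :=
      Tendsto.div tendsto_const_nhds h1 (by norm_num)
    rw [show (3:ℝ)/(3-0) = 1 by norm_num] at h2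
    exact h2
  refine ge_of_tendsto' hlim (fun n => ?_)
  obtain ⟨u, hu, hTu⟩ := exists_unit_small n
  rw [← hTu]
  exact minMod_le _ u hu

lemma not_attains' : ¬ AttainsMinMod Tclm := by
  rintro ⟨x, hx, hxx⟩
  have h1 := key_lower x hx
  have h2 := minMod_T_le_one
  rw [hxx] at h1
  linarith

lemma minMod_TL_le (L : Xs →L[ℝ] Xs) (hL : IsCompactOperator ⇑L) :
    minMod (Tclm + L) ≤ ‖Tclm‖ + 1 := by
  obtain ⟨C, hCc, hCs⟩ :=
    IsCompactOperator.image_closedBall_subset_compact (𝕜₁ := ℝ)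
      (f := (L : Xs →ₗ[ℝ] Xs)) hL 2
  have hmem : ∀ k : ℕ, L (e1b (k+1)) ∈ C := by
    intro k
    apply hCs
    refine ⟨e1b (k+1), ?_, rfl⟩
    rw [Metric.mem_closedBall, dist_zero_right, norm_e1b]
    norm_num
  obtain ⟨z, _, φ, hφ, hconv⟩ := hCc.tendsto_subseq hmem
  obtain ⟨N, hN⟩ := (Metric.tendsto_atTop.mp hconv) 1 one_pos
  set i := φ N + 1 with hi
  set j := φ (N+1) + 1 with hj
  have hij : i ≠ j := by
    have : φ N < φ (N+1) := hφ (by omega)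
    omega
  have hdist : dist (L (e1b i)) (L (e1b j)) < 2 := by
    have h1 := hN N le_rfl
    have h2 := hN (N+1) (Nat.le_succ N)
    calc dist (L (e1b i)) (L (e1b j))
        ≤ dist (L (e1b i)) z + dist (L (e1b j)) z := dist_triangle_right _ _ _
      _ < 1 + 1 := add_lt_add h1 h2
      _ = 2 := by norm_num
  set w : Xs := (1:ℝ) • e1b i + (-1:ℝ) • e1b j with hw
  have hwnorm : ‖w‖ = 2 := by
    rw [hw, norm_two_point 1 (-1) hij]
    norm_num
  set x : Xs := (1/2 : ℝ) • w with hx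
  have hxnorm : ‖x‖ = 1 := by
    rw [hx, norm_smul, hwnorm]
    norm_num
  have hLw : L w = L (e1b i) - L (e1b j) := by
    rw [hw, map_add, map_smul, map_smul, one_smul, neg_one_smul, ← sub_eq_add_neg]
  have hLx : ‖L x‖ < 1 := by
    rw [hx, map_smul, norm_smul, hLw, ← dist_eq_norm]
    rw [Real.norm_eq_abs]
    have : |(1/2 : ℝ)| = 1/2 := by norm_num
    rw [this]
    linarith
  calc minMod (Tclm + L) ≤ ‖(Tclm + L) x‖ := minMod_le _ x hxnorm
    _ = ‖Tclm x + L x‖ := rfl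
    _ ≤ ‖Tclm x‖ + ‖L x‖ := norm_add_le _ _
    _ ≤ ‖Tclm‖ * ‖x‖ + ‖L x‖ := by
        have := Tclm.le_opNorm x
        linarith
    _ ≤ ‖Tclm‖ + 1 := by
        rw [hxnorm, mul_one]
        linarith

end S16

theorem stmt16 :
    ∃ T K : lp (fun _ : ℕ => ℝ) 1 →L[ℝ] lp (fun _ : ℕ => ℝ) 1,
      T (e1b 0) = -(3/2 : ℝ) • e1b 1 ∧
      (∀ n : ℕ, 1 ≤ n →
        T (e1b n) = (3 : ℝ) • ((1 - (1/2 : ℝ) ^ (n + 1)) • e1b 1 + e1b (n + 1))) ∧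
      (∀ x : lp (fun _ : ℕ => ℝ) 1,
        K x = ((x : ∀ i : ℕ, ℝ) 0) • ((3/2 : ℝ) • e1b 1 + (3 : ℝ) • e1b 0)) ∧
      IsCompactOperator ⇑K ∧
      ¬ AttainsMinMod T ∧
      minMod T ≤ 1 ∧
      3 ≤ minMod (T + K) ∧
      minMod T <
        sSup {r : ℝ | ∃ L : lp (fun _ : ℕ => ℝ) 1 →L[ℝ] lp (fun _ : ℕ => ℝ) 1,
          IsCompactOperator ⇑L ∧ r = minMod (T + L)} := by
  refine ⟨S16.Tclm, S16.Kclm, S16.T_e1b_zero, ?_, fun x => rfl, S16.Kclm_compact,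
    S16.not_attains', S16.minMod_T_le_one, S16.le_minMod _ 3 S16.norm_TK_ge, ?_⟩
  · intro n hn
    match n, hn with
    | (m+1), _ => exact S16.T_e1b_succ m
  · have hbdd : BddAbove {r : ℝ | ∃ L : lp (fun _ : ℕ => ℝ) 1 →L[ℝ] lp (fun _ : ℕ => ℝ) 1,
        IsCompactOperator ⇑L ∧ r = minMod (S16.Tclm + L)} := by
      refine ⟨‖S16.Tclm‖ + 1, ?_⟩
      rintro r ⟨L, hL, rfl⟩
      exact S16.minMod_TL_le L hL
    have hmem : minMod (S16.Tclm + S16.Kclm) ∈ {r : ℝ |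
        ∃ L : lp (fun _ : ℕ => ℝ) 1 →L[ℝ] lp (fun _ : ℕ => ℝ) 1,
        IsCompactOperator ⇑L ∧ r = minMod (S16.Tclm + L)} := ⟨S16.Kclm, S16.Kclm_compact, rfl⟩
    have h1 := le_csSup hbdd hmem
    have h2 : (3:ℝ) ≤ minMod (S16.Tclm + S16.Kclm) := S16.le_minMod _ 3 S16.norm_TK_ge
    have h3 := S16.minMod_T_le_one
    linarith
end

section
/- Let X, Y be Banach spaces, 1 ≤ p < q < ∞, and Z a nontrivial finite-dimensional Banach space. If there exists T ∈ L(X,Y) with m(T) > 0 that does not attain its minimum modulus, then the operator S : X ⊕_p Z → Y ⊕_q Z, S(x,z) = (Tx/m(T), z), satisfies m(S) = 2^{(p−q)/(pq)} and S does not attain its minimum modulus; consequently the pair (X ⊕_p Z, Y ⊕_q Z) fails the compact perturbation property for minimum modulus. -/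
open Filter Topology

open scoped ENNReal


open scoped NNReal

section stmt17aux

lemma stmt17.rpow_one_div_rpow {x r : ℝ} (hx : 0 ≤ x) (hr : r ≠ 0) : (x ^ r) ^ (1/r) = x := by
  rw [← Real.rpow_mul hx, mul_one_div, div_self hr, Real.rpow_one]

lemma stmt17.auxPMnn {p q : ℝ} (hp : 0 < p) (hpq : p < q) (a b : ℝ≥0) :
    (2:ℝ≥0) ^ (1/q - 1/p) * (a^p + b^p)^(1/p) ≤ (a^q + b^q)^(1/q) := by
  have hq : 0 < q := hp.trans hpq
  have h1 : (1:ℝ) ≤ q / p := (one_le_div hp).2 hpq.le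
  have h := NNReal.rpow_add_le_mul_rpow_add_rpow (a^p) (b^p) h1
  have h2 := NNReal.rpow_le_rpow h (by positivity : (0:ℝ) ≤ 1/q)
  rw [NNReal.mul_rpow, ← NNReal.rpow_mul, ← NNReal.rpow_mul, ← NNReal.rpow_mul,
    ← NNReal.rpow_mul] at h2
  have e1 : q / p * (1/q) = 1/p := by field_simp
  have e2 : p * (q/p) = q := by field_simp
  rw [e1, e2] at h2
  calc (2:ℝ≥0) ^ (1/q - 1/p) * (a^p + b^p)^(1/p)
      ≤ (2:ℝ≥0) ^ (1/q - 1/p) * ((2:ℝ≥0) ^ ((q/p-1) * (1/q)) * (a^q + b^q)^(1/q)) := by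
        exact mul_le_mul_of_nonneg_left h2 (by positivity)
    _ = (a^q + b^q)^(1/q) := by
        rw [← mul_assoc, ← NNReal.rpow_add two_ne_zero]
        have h0 : 1/q - 1/p + (q/p - 1) * (1/q) = 0 := by field_simp; ring
        rw [h0, NNReal.rpow_zero, one_mul]

lemma stmt17.auxPM {p q : ℝ} (hp : 0 < p) (hpq : p < q) {a b : ℝ} (ha : 0 ≤ a) (hb : 0 ≤ b) :
    (2:ℝ) ^ (1/q - 1/p) * (a^p + b^p)^(1/p) ≤ (a^q + b^q)^(1/q) := by
  lift a to ℝ≥0 using ha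
  lift b to ℝ≥0 using hb
  have h := stmt17.auxPMnn hp hpq a b
  have h' := NNReal.coe_le_coe.2 h
  push_cast at h'
  convert h' using 3 <;> norm_num

lemma stmt17.lower_est {p q A a b : ℝ} (hp : 0 < p) (hpq : p < q) (ha : 0 ≤ a) (hb : 0 ≤ b)
    (hA : a ≤ A) (hab : a^p + b^p = 1) :
    (2:ℝ)^(1/q - 1/p) ≤ (A^q + b^q)^(1/q) := by
  have hq : 0 < q := hp.trans hpq
  have h1 : (a^q + b^q)^(1/q) ≤ (A^q + b^q)^(1/q) :=
    Real.rpow_le_rpow (by positivity)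
      (add_le_add (Real.rpow_le_rpow ha hA hq.le) le_rfl) (by positivity)
  have h2 := stmt17.auxPM hp hpq ha hb
  rw [hab, Real.one_rpow, mul_one] at h2
  exact h2.trans h1

lemma stmt17.lower_est_strict {p q A a b : ℝ} (hp : 0 < p) (hpq : p < q) (ha : 0 ≤ a)
    (hb : 0 ≤ b) (hA : a < A) (hab : a^p + b^p = 1) :
    (2:ℝ)^(1/q - 1/p) < (A^q + b^q)^(1/q) := by
  have hq : 0 < q := hp.trans hpq
  have h1 : (a^q + b^q)^(1/q) < (A^q + b^q)^(1/q) :=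
    Real.rpow_lt_rpow (by positivity)
      (add_lt_add_of_lt_of_le (Real.rpow_lt_rpow ha hA hq) le_rfl) (by positivity)
  have h2 := stmt17.auxPM hp hpq ha hb
  rw [hab, Real.one_rpow, mul_one] at h2
  exact h2.trans_lt h1

lemma stmt17.lower_est2 {p q a b A t' : ℝ} (hp : 0 < p) (hq : 0 < q) (ht0 : 0 < t')
    (ht1 : t' < 1) (ha : 0 ≤ a) (hb : 0 ≤ b) (haA : a ≤ A) (hab : a^p + b^p = 1) :
    t' ≤ (A^q + (t' * (1 - t'^p)^(-(1/p)) * b)^q)^(1/q) := by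
  have hA0 : 0 ≤ A := ha.trans haA
  have hβ0 : 0 < 1 - t'^p := by
    have : t'^p < 1 := Real.rpow_lt_one ht0.le ht1 hp
    linarith
  by_cases hcase : t' ≤ a
  · calc t' ≤ A := hcase.trans haA
      _ = (A^q)^(1/q) := (stmt17.rpow_one_div_rpow hA0 hq.ne').symm
      _ ≤ (A^q + (t' * (1 - t'^p)^(-(1/p)) * b)^q)^(1/q) :=
          Real.rpow_le_rpow (by positivity)
            (le_add_of_nonneg_right (by positivity)) (by positivity)
  · push_neg at hcase
    have hbp : 1 - t'^p ≤ b^p := by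
      have hap : a^p ≤ t'^p := Real.rpow_le_rpow ha hcase.le hp.le
      linarith
    have hbβ : (1 - t'^p)^(1/p) ≤ b := by
      have h := Real.rpow_le_rpow hβ0.le hbp (by positivity : (0:ℝ) ≤ 1/p)
      rwa [stmt17.rpow_one_div_rpow hb hp.ne'] at h
    have hc : t' ≤ t' * (1 - t'^p)^(-(1/p)) * b := by
      calc t' = t' * (1 - t'^p)^(-(1/p)) * (1 - t'^p)^(1/p) := by
            rw [mul_assoc, ← Real.rpow_add hβ0]; simp
        _ ≤ t' * (1 - t'^p)^(-(1/p)) * b :=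
            mul_le_mul_of_nonneg_left hbβ (by positivity)
    calc t' ≤ t' * (1 - t'^p)^(-(1/p)) * b := hc
      _ = ((t' * (1 - t'^p)^(-(1/p)) * b)^q)^(1/q) :=
          (stmt17.rpow_one_div_rpow (by positivity) hq.ne').symm
      _ ≤ (A^q + (t' * (1 - t'^p)^(-(1/p)) * b)^q)^(1/q) :=
          Real.rpow_le_rpow (by positivity)
            (le_add_of_nonneg_left (by positivity)) (by positivity)

variable {X Y : Type*} [NormedAddCommGroup X] [NormedSpace ℝ X]
    [NormedAddCommGroup Y] [NormedSpace ℝ Y]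

lemma stmt17.minMod_bddBelow (T : X →L[ℝ] Y) :
    BddBelow {r : ℝ | ∃ x : X, ‖x‖ = 1 ∧ ‖T x‖ = r} :=
  ⟨0, fun _ ⟨_, _, hr⟩ => hr ▸ norm_nonneg _⟩

lemma stmt17.minMod_le (T : X →L[ℝ] Y) {x : X} (hx : ‖x‖ = 1) : minMod T ≤ ‖T x‖ :=
  csInf_le (stmt17.minMod_bddBelow T) ⟨x, hx, rfl⟩

lemma stmt17.minMod_mul_le {T : X →L[ℝ] Y} (hT : 0 < minMod T) (x : X) :
    minMod T * ‖x‖ ≤ ‖T x‖ := by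
  rcases eq_or_ne x 0 with rfl | hx
  · simp
  · have hu : ‖(‖x‖⁻¹ : ℝ) • x‖ = 1 := norm_smul_inv_norm hx
    have h := stmt17.minMod_le T hu
    rw [map_smul, norm_smul, norm_inv, Real.norm_eq_abs, abs_of_pos (norm_pos_iff.2 hx)] at h
    have hxp : (0:ℝ) < ‖x‖ := norm_pos_iff.2 hx
    rw [mul_comm]
    calc ‖x‖ * minMod T ≤ ‖x‖ * (‖x‖⁻¹ * ‖T x‖) := mul_le_mul_of_nonneg_left h hxp.le
      _ = ‖T x‖ := by field_simp

lemma stmt17.minMod_mul_lt {T : X →L[ℝ] Y} (hT : 0 < minMod T) (hTna : ¬ AttainsMinMod T)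
    {x : X} (hx : x ≠ 0) : minMod T * ‖x‖ < ‖T x‖ := by
  have hu : ‖(‖x‖⁻¹ : ℝ) • x‖ = 1 := norm_smul_inv_norm hx
  have h1 : minMod T < ‖T ((‖x‖⁻¹ : ℝ) • x)‖ :=
    lt_of_le_of_ne (stmt17.minMod_le T hu) fun h => hTna ⟨_, hu, h.symm⟩
  rw [map_smul, norm_smul, norm_inv, Real.norm_eq_abs, abs_of_pos (norm_pos_iff.2 hx)] at h1
  have hxp : (0:ℝ) < ‖x‖ := norm_pos_iff.2 hx
  calc minMod T * ‖x‖ < (‖x‖⁻¹ * ‖T x‖) * ‖x‖ := mul_lt_mul_of_pos_right h1 hxp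
    _ = ‖T x‖ := by field_simp

lemma stmt17.minMod_exists_lt {T : X →L[ℝ] Y} (hT : 0 < minMod T) {ε : ℝ} (hε : 0 < ε) :
    ∃ x : X, ‖x‖ = 1 ∧ ‖T x‖ < minMod T + ε := by
  by_cases hne : {r : ℝ | ∃ x : X, ‖x‖ = 1 ∧ ‖T x‖ = r}.Nonempty
  · obtain ⟨r, ⟨x, hx, hrx⟩, hr⟩ := exists_lt_of_csInf_lt hne
      (show sInf _ < minMod T + ε from lt_add_of_pos_right _ hε)
    exact ⟨x, hx, hrx ▸ hr⟩
  · exfalso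
    rw [Set.not_nonempty_iff_eq_empty] at hne
    rw [minMod, hne, Real.sInf_empty] at hT
    exact lt_irrefl _ hT

end stmt17aux

section stmt17aux2
variable (p q : ℝ≥0∞) [Fact (1 ≤ p)] [Fact (1 ≤ q)]
    {X Y Z : Type*} [NormedAddCommGroup X] [NormedSpace ℝ X]
    [NormedAddCommGroup Y] [NormedSpace ℝ Y]
    [NormedAddCommGroup Z] [NormedSpace ℝ Z]

noncomputable def stmt17.Sop (T' : X →L[ℝ] Y) (D : Z →L[ℝ] Z) :
    WithLp p (X × Z) →L[ℝ] WithLp q (Y × Z) :=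
  ((WithLp.prodContinuousLinearEquiv q ℝ Y Z).symm : (Y × Z) →L[ℝ] WithLp q (Y × Z)) ∘L
    ((T'.prodMap D) ∘L
      ((WithLp.prodContinuousLinearEquiv p ℝ X Z) : WithLp p (X × Z) →L[ℝ] (X × Z)))

lemma stmt17.Sop_apply' (T' : X →L[ℝ] Y) (D : Z →L[ℝ] Z) (w : WithLp p (X × Z)) :
    WithLp.equiv q (Y × Z) (stmt17.Sop p q T' D w) =
      (T' (WithLp.equiv p (X × Z) w).1, D (WithLp.equiv p (X × Z) w).2) := by
  simp [stmt17.Sop, ContinuousLinearMap.coe_prodMap', Prod.map]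

lemma stmt17.norm_withLp (hp0 : 0 < p.toReal) (w : WithLp p (X × Z)) :
    ‖w‖ = (‖(WithLp.equiv p (X × Z) w).1‖ ^ p.toReal
      + ‖(WithLp.equiv p (X × Z) w).2‖ ^ p.toReal) ^ (1/p.toReal) := by
  rw [WithLp.prod_norm_eq_add hp0]
  rfl

lemma stmt17.Sop_norm (hq0 : 0 < q.toReal) (T' : X →L[ℝ] Y) (D : Z →L[ℝ] Z)
    (w : WithLp p (X × Z)) :
    ‖stmt17.Sop p q T' D w‖ = (‖T' (WithLp.equiv p (X × Z) w).1‖ ^ q.toReal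
      + ‖D (WithLp.equiv p (X × Z) w).2‖ ^ q.toReal) ^ (1/q.toReal) := by
  rw [stmt17.norm_withLp q hq0, stmt17.Sop_apply']

lemma stmt17.compact_aux [FiniteDimensional ℝ Z] {W V : Type*}
    [NormedAddCommGroup W] [NormedSpace ℝ W] [NormedAddCommGroup V] [NormedSpace ℝ V]
    (j : Z →L[ℝ] W) (g : V →L[ℝ] Z) : IsCompactOperator ⇑(j ∘L g) := by
  refine ⟨j '' Metric.closedBall 0 1,
    ((isCompact_closedBall (0:Z) 1).image j.continuous), ?_⟩
  have h1 : ⇑g ⁻¹' Metric.closedBall 0 1 ∈ 𝓝 (0 : V) :=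
    g.continuous.continuousAt.preimage_mem_nhds
      (by rw [map_zero]; exact Metric.closedBall_mem_nhds 0 one_pos)
  exact Filter.mem_of_superset h1 fun w hw => ⟨g w, hw, rfl⟩

end stmt17aux2

open stmt17

theorem stmt17 (p q : ℝ≥0∞) [Fact (1 ≤ p)] [Fact (1 ≤ q)]
    (hp : 1 ≤ p.toReal) (hpq : p.toReal < q.toReal) (hp' : p ≠ ⊤) (hq' : q ≠ ⊤)
    {X Y Z : Type*} [NormedAddCommGroup X] [NormedSpace ℝ X] [CompleteSpace X]
    [NormedAddCommGroup Y] [NormedSpace ℝ Y] [CompleteSpace Y]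
    [NormedAddCommGroup Z] [NormedSpace ℝ Z] [FiniteDimensional ℝ Z] [Nontrivial Z]
    (T : X →L[ℝ] Y) (hT : 0 < minMod T) (hTna : ¬ AttainsMinMod T) :
    (∃ S : WithLp p (X × Z) →L[ℝ] WithLp q (Y × Z),
      (∀ w : WithLp p (X × Z),
        WithLp.equiv q (Y × Z) (S w) =
          ((minMod T)⁻¹ • T (WithLp.equiv p (X × Z) w).1, (WithLp.equiv p (X × Z) w).2)) ∧
      minMod S = 2 ^ ((p.toReal - q.toReal) / (p.toReal * q.toReal)) ∧
      ¬ AttainsMinMod S) ∧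
    ¬ (∀ S : WithLp p (X × Z) →L[ℝ] WithLp q (Y × Z), ¬ AttainsMinMod S →
        sSup {r : ℝ | ∃ K : WithLp p (X × Z) →L[ℝ] WithLp q (Y × Z),
          IsCompactOperator ⇑K ∧ r = minMod (S + K)} = minMod S) := by
  have hp0 : 0 < p.toReal := lt_of_lt_of_le one_pos hp
  have hq0 : 0 < q.toReal := hp0.trans hpq
  set p' := p.toReal with hp'def
  set q' := q.toReal with hq'def
  -- unit vector in Z
  obtain ⟨z1, hz1⟩ := exists_ne (0 : Z)
  set z₀ : Z := (‖z1‖⁻¹ : ℝ) • z1 with hz₀def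
  have hz₀ : ‖z₀‖ = 1 := norm_smul_inv_norm hz1
  set T' : X →L[ℝ] Y := (minMod T)⁻¹ • T with hT'def
  have hT'norm : ∀ x : X, ‖T' x‖ = (minMod T)⁻¹ * ‖T x‖ := by
    intro x
    rw [hT'def, ContinuousLinearMap.smul_apply, norm_smul, Real.norm_eq_abs,
      abs_of_pos (inv_pos.2 hT)]
  have hT'1 : ∀ x : X, ‖x‖ ≤ ‖T' x‖ := by
    intro x
    rw [hT'norm, le_inv_mul_iff₀ hT]
    exact minMod_mul_le hT x
  have hT'2 : ∀ x : X, x ≠ 0 → ‖x‖ < ‖T' x‖ := by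
    intro x hx
    rw [hT'norm, lt_inv_mul_iff₀ hT]
    exact minMod_mul_lt hT hTna hx
  have hT'3 : ∀ δ : ℝ, 0 < δ → ∃ x : X, ‖x‖ = 1 ∧ ‖T' x‖ < 1 + δ := by
    intro δ hδ
    obtain ⟨x, hx1, hx2⟩ := minMod_exists_lt hT (mul_pos hT hδ)
    refine ⟨x, hx1, ?_⟩
    rw [hT'norm]
    rw [inv_mul_lt_iff₀ hT]
    calc ‖T x‖ < minMod T + minMod T * δ := hx2
      _ = minMod T * (1 + δ) := by ring
  set S : WithLp p (X × Z) →L[ℝ] WithLp q (Y × Z) :=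
    Sop p q T' (ContinuousLinearMap.id ℝ Z) with hSdef
  set e := WithLp.equiv p (X × Z)
  set t : ℝ := 2 ^ (1/q' - 1/p') with htdef
  have htpos : 0 < t := Real.rpow_pos_of_pos two_pos _
  have hts : (1:ℝ)/q' - 1/p' < 0 := by
    have : 1/q' < 1/p' := by
      apply one_div_lt_one_div_of_lt hp0 hpq
    linarith
  have ht1 : t < 1 := Real.rpow_lt_one_of_one_lt_of_neg one_lt_two hts
  have hexp : (p' - q') / (p' * q') = 1/q' - 1/p' := by
    rw [div_sub_div _ _ hq0.ne' hp0.ne', one_mul, mul_one, mul_comm]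
  have hSnorm : ∀ w : WithLp p (X × Z),
      ‖S w‖ = (‖T' (e w).1‖ ^ q' + ‖(e w).2‖ ^ q') ^ (1/q') := by
    intro w
    rw [hSdef, Sop_norm p q hq0]
    rfl
  have hunit : ∀ w : WithLp p (X × Z), ‖w‖ = 1 →
      ‖(e w).1‖ ^ p' + ‖(e w).2‖ ^ p' = 1 := by
    intro w hw
    have h : ‖w‖ = (‖(e w).1‖ ^ p' + ‖(e w).2‖ ^ p') ^ (1/p') := norm_withLp p hp0 w
    rw [hw] at h
    have hA : (0:ℝ) ≤ ‖(e w).1‖ ^ p' + ‖(e w).2‖ ^ p' := by positivity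
    have h4 : ((‖(e w).1‖ ^ p' + ‖(e w).2‖ ^ p') ^ (1/p')) ^ p' = 1 := by
      rw [← h]; exact Real.one_rpow p'
    rwa [← Real.rpow_mul hA, one_div, inv_mul_cancel₀ hp0.ne', Real.rpow_one] at h4
  -- lower bound on values
  have hlow : ∀ w : WithLp p (X × Z), ‖w‖ = 1 → t ≤ ‖S w‖ := by
    intro w hw
    rw [hSnorm w]
    exact lower_est hp0 hpq (norm_nonneg _) (norm_nonneg _) (hT'1 _) (hunit w hw)
  -- B is the defining set for minMod S
  have hBbdd : BddBelow {r : ℝ | ∃ w : WithLp p (X × Z), ‖w‖ = 1 ∧ ‖S w‖ = r} :=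
    ⟨0, fun r ⟨w, _, hr⟩ => hr ▸ norm_nonneg _⟩
  -- unit vectors
  have hmk : ∀ (x : X) (z : Z), ‖(e.symm (x, z) : WithLp p (X × Z))‖
      = (‖x‖ ^ p' + ‖z‖ ^ p') ^ (1/p') := by
    intro x z
    rw [norm_withLp p hp0, Equiv.apply_symm_apply]
  have hw₀unit : ‖(e.symm (0, z₀) : WithLp p (X × Z))‖ = 1 := by
    rw [hmk, norm_zero, hz₀, Real.zero_rpow hp0.ne', Real.one_rpow, zero_add, Real.one_rpow]
  have hBne : {r : ℝ | ∃ w : WithLp p (X × Z), ‖w‖ = 1 ∧ ‖S w‖ = r}.Nonempty :=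
    ⟨‖S (e.symm (0, z₀))‖, e.symm (0, z₀), hw₀unit, rfl⟩
  have hminS_ge : t ≤ minMod S := le_csInf hBne fun r ⟨w, hw, hr⟩ => hr ▸ hlow w hw
  set c₀ : ℝ := 2 ^ (-(1/p')) with hc₀def
  have hc₀ : 0 < c₀ := Real.rpow_pos_of_pos two_pos _
  have hc₀p : c₀ ^ p' = 1/2 := by
    rw [hc₀def, ← Real.rpow_mul (by norm_num : (0:ℝ) ≤ 2), neg_mul, one_div,
      inv_mul_cancel₀ hp0.ne', Real.rpow_neg_one]
    norm_num
  have hminS_le : minMod S ≤ t := by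
    refine le_of_forall_gt_imp_ge_of_dense fun u hu => ?_
    have c1 : ContinuousAt (fun s : ℝ => s ^ q') 1 :=
      Real.continuousAt_rpow_const 1 q' (Or.inl one_ne_zero)
    have c2 : ContinuousAt (fun s : ℝ => s ^ q' + 1) 1 := c1.add continuousAt_const
    have c3 : ContinuousAt (fun s : ℝ => (s ^ q' + 1) ^ (1/q')) 1 :=
      c2.rpow_const (Or.inl (by simp [Real.one_rpow]))
    have c4 : ContinuousAt (fun s : ℝ => c₀ * (s ^ q' + 1) ^ (1/q')) 1 :=
      continuousAt_const.mul c3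
    have hval : c₀ * ((1:ℝ) ^ q' + 1) ^ (1/q') = t := by
      rw [Real.one_rpow, htdef, hc₀def]
      rw [show (1:ℝ) + 1 = 2 by norm_num, ← Real.rpow_add two_pos]
      ring_nf
    have htt : Tendsto (fun s : ℝ => c₀ * (s ^ q' + 1) ^ (1/q')) (𝓝 1) (𝓝 t) := by
      have := c4.tendsto
      rwa [hval] at this
    have hev : ∀ᶠ s : ℝ in 𝓝 1, c₀ * (s ^ q' + 1) ^ (1/q') < u :=
      htt.eventually_lt_const hu
    obtain ⟨δ, hδpos, hδ⟩ := Metric.eventually_nhds_iff.mp hev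
    obtain ⟨x, hx1, hx2⟩ := hT'3 (δ/2) (by positivity)
    set w : WithLp p (X × Z) := e.symm (c₀ • x, c₀ • z₀) with hwdef
    have hew : e w = (c₀ • x, c₀ • z₀) := Equiv.apply_symm_apply _ _
    have hwu : ‖w‖ = 1 := by
      rw [hwdef, hmk, norm_smul, norm_smul, hx1, hz₀, mul_one,
        Real.norm_eq_abs, abs_of_pos hc₀, hc₀p]
      norm_num
    have hwv : ‖S w‖ = c₀ * (‖T' x‖ ^ q' + 1) ^ (1/q') := by
      rw [hSnorm, hew]
      show (‖T' (c₀ • x)‖ ^ q' + ‖c₀ • z₀‖ ^ q') ^ (1/q') = _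
      rw [map_smul, norm_smul, norm_smul, hz₀, mul_one, Real.norm_eq_abs, abs_of_pos hc₀,
        Real.mul_rpow hc₀.le (norm_nonneg _),
        show c₀ ^ q' * ‖T' x‖ ^ q' + c₀ ^ q' = c₀ ^ q' * (‖T' x‖ ^ q' + 1) by ring,
        Real.mul_rpow (by positivity) (by positivity), rpow_one_div_rpow hc₀.le hq0.ne']
    have hTx1 : 1 ≤ ‖T' x‖ := by
      have := hT'1 x
      rwa [hx1] at this
    have hdist : dist ‖T' x‖ 1 < δ := by
      rw [Real.dist_eq, abs_of_nonneg (by linarith)]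
      linarith
    have hlt : ‖S w‖ < u := by
      rw [hwv]
      exact hδ hdist
    exact (csInf_le hBbdd ⟨w, hwu, rfl⟩).trans hlt.le
  have hminS : minMod S = t := le_antisymm hminS_le hminS_ge
  have hSna : ¬ AttainsMinMod S := by
    rintro ⟨w, hw, hwe⟩
    rw [hminS] at hwe
    by_cases hx : (e w).1 = 0
    · have hab := hunit w hw
      rw [hx, norm_zero, Real.zero_rpow hp0.ne', zero_add] at hab
      have hb1 : ‖(e w).2‖ = 1 := by
        have := rpow_one_div_rpow (norm_nonneg ((e w).2)) hp0.ne'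
        rw [hab, Real.one_rpow] at this
        exact this.symm
      have : ‖S w‖ = 1 := by
        rw [hSnorm, hx, map_zero, norm_zero, hb1, Real.zero_rpow hq0.ne',
          Real.one_rpow, zero_add, Real.one_rpow]
      rw [hwe] at this
      exact absurd this ht1.ne
    · have : t < ‖S w‖ := by
        rw [hSnorm w]
        exact lower_est_strict hp0 hpq (norm_nonneg _) (norm_nonneg _)
          (hT'2 _ hx) (hunit w hw)
      rw [hwe] at this
      exact lt_irrefl _ this
  constructor
  · refine ⟨S, ?_, ?_, hSna⟩
    · intro w
      rw [hSdef, Sop_apply']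
      rfl
    · rw [hminS, htdef, hexp]
  · intro H
    set t' : ℝ := (1 + t)/2 with ht'def
    have ht'0 : 0 < t' := by rw [ht'def]; linarith
    have ht'1 : t' < 1 := by rw [ht'def]; linarith
    have htt' : t < t' := by rw [ht'def]; linarith
    have hβ : 0 < 1 - t' ^ p' := by
      have := Real.rpow_lt_one ht'0.le ht'1 hp0
      linarith
    set c : ℝ := t' * (1 - t' ^ p') ^ (-(1/p')) with hcdef
    have hc0 : 0 < c := by rw [hcdef]; positivity
    set S₂ : WithLp p (X × Z) →L[ℝ] WithLp q (Y × Z) :=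
      Sop p q T' (c • ContinuousLinearMap.id ℝ Z) with hS2def
    set jop : Z →L[ℝ] WithLp q (Y × Z) :=
      ((WithLp.prodContinuousLinearEquiv q ℝ Y Z).symm : (Y × Z) →L[ℝ] WithLp q (Y × Z)) ∘L
        ((c - 1) • ContinuousLinearMap.inr ℝ Y Z) with hjdef
    set gop : WithLp p (X × Z) →L[ℝ] Z :=
      ContinuousLinearMap.snd ℝ X Z ∘L
        ((WithLp.prodContinuousLinearEquiv p ℝ X Z) : WithLp p (X × Z) →L[ℝ] (X × Z)) with hgdef
    set Kop : WithLp p (X × Z) →L[ℝ] WithLp q (Y × Z) := jop ∘L gop with hKdef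
    have hKcomp : IsCompactOperator ⇑Kop := compact_aux jop gop
    have hgapp : ∀ w : WithLp p (X × Z), gop w = (e w).2 := fun w => rfl
    have hKapp : ∀ w : WithLp p (X × Z),
        WithLp.equiv q (Y × Z) (Kop w) = (0, (c - 1) • (e w).2) := by
      intro w
      rw [hKdef, ContinuousLinearMap.comp_apply, hjdef, ContinuousLinearMap.comp_apply]
      rw [ContinuousLinearEquiv.coe_coe, WithLp.prodContinuousLinearEquiv_symm_apply,
        WithLp.equiv_apply, WithLp.ofLp_toLp, ContinuousLinearMap.smul_apply,
        ContinuousLinearMap.inr_apply, hgapp, Prod.smul_mk, smul_zero]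
    have hSK : S + Kop = S₂ := by
      refine ContinuousLinearMap.ext fun w => ?_
      apply (WithLp.equiv q (Y × Z)).injective
      rw [ContinuousLinearMap.add_apply]
      show WithLp.equiv q (Y × Z) (S w) + WithLp.equiv q (Y × Z) (Kop w) = _
      rw [hKapp, hSdef, hS2def,
        Sop_apply', Sop_apply']
      refine Prod.ext ?_ ?_
      · show T' (e w).1 + 0 = T' (e w).1
        rw [add_zero]
      · show (e w).2 + (c - 1) • (e w).2 = (c • ContinuousLinearMap.id ℝ Z) (e w).2
        rw [ContinuousLinearMap.smul_apply, ContinuousLinearMap.id_apply,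
          sub_smul, one_smul]
        abel
    have hS2low : ∀ w : WithLp p (X × Z), ‖w‖ = 1 → t' ≤ ‖S₂ w‖ := by
      intro w hw
      have hn := Sop_norm p q hq0 T' (c • ContinuousLinearMap.id ℝ Z) w
      rw [← hS2def] at hn
      have hcid : (c • ContinuousLinearMap.id ℝ Z) ((WithLp.equiv p (X × Z)) w).2
          = c • ((WithLp.equiv p (X × Z)) w).2 := rfl
      rw [hn, hcid, norm_smul, Real.norm_eq_abs, abs_of_pos hc0, hcdef]
      exact lower_est2 hp0 hq0 ht'0 ht'1 (norm_nonneg _) (norm_nonneg _)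
        (hT'1 _) (hunit w hw)
    have hminS2 : t' ≤ minMod S₂ :=
      le_csInf ⟨‖S₂ (e.symm (0, z₀))‖, e.symm (0, z₀), hw₀unit, rfl⟩
        (fun r ⟨w, hw, hr⟩ => hr ▸ hS2low w hw)
    have hmem : minMod S₂ ∈ {r : ℝ | ∃ K : WithLp p (X × Z) →L[ℝ] WithLp q (Y × Z),
        IsCompactOperator ⇑K ∧ r = minMod (S + K)} := ⟨Kop, hKcomp, by rw [hSK]⟩
    have hsup := H S hSna
    by_cases hbdd : BddAbove {r : ℝ | ∃ K : WithLp p (X × Z) →L[ℝ] WithLp q (Y × Z),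
        IsCompactOperator ⇑K ∧ r = minMod (S + K)}
    · have hle : minMod S₂ ≤ minMod S := by
        rw [← hsup]
        exact le_csSup hbdd hmem
      rw [hminS] at hle
      linarith
    · rw [csSup_of_not_bddAbove hbdd, Real.sSup_empty, hminS] at hsup
      linarith
end
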